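/- Every trace-free real quadratic form in three variables x, y, z can be written, after an orthonormal change of coordinates, in the form A(x² − y²) + Bxz for some A, B ∈ ℝ. -/

import Mathlib

open Matrix

lemma stmt9_bij : ∀ a b : Fin 3, a ≠ b → Function.Bijective ![a, -(a+b), b] := by decide

lemma stmt9_key (p q t x y z : ℝ) (ht : t^2 = p^2 + q^2) (htne : t ≠ 0) :
    p^2*x^2 + (q^2-p^2)*y^2 + -q^2*z^2
      = (p^2-q^2)*((p/t*x+q/t*z)^2 - y^2)
        + (2*p*q)*((p/t*x+q/t*z)*(q/t*x-p/t*z)) := by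
  field_simp
  linear_combination (p^2*x^2 - q^2*z^2) * ht

lemma stmt9_diag (e : Fin 3 → ℝ) (hsum : e 0 + e 1 + e 2 = 0) :
    ∃ (Q : Matrix (Fin 3) (Fin 3) ℝ) (A B : ℝ), Q * Qᵀ = 1 ∧
      ∀ u : Fin 3 → ℝ, (∑ i, e i * u i ^ 2) =
        A * ((Q *ᵥ u) 0 ^ 2 - (Q *ᵥ u) 1 ^ 2) + B * ((Q *ᵥ u) 0 * (Q *ᵥ u) 2) := by
  by_cases h0 : ∀ i, e i = 0
  · refine ⟨1, 0, 0, by simp, fun u => by simp [h0]⟩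
  · push_neg at h0
    obtain ⟨i0, hi0⟩ := h0
    obtain ⟨imax, hmax⟩ := Finite.exists_max e
    obtain ⟨imin, hmin⟩ := Finite.exists_min e
    have h1 : 0 < e imax := by
      by_contra hc
      push_neg at hc
      have l0 : e 0 ≤ 0 := le_trans (hmax 0) hc
      have l1 : e 1 ≤ 0 := le_trans (hmax 1) hc
      have l2 : e 2 ≤ 0 := le_trans (hmax 2) hc
      fin_cases i0 <;> simp only [Fin.mk_zero, Fin.mk_one] at hi0 <;>
        rcases lt_or_gt_of_ne hi0 with h | h <;> simp_all <;> linarith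
    have h3 : e imin < 0 := by
      by_contra hc
      push_neg at hc
      have l0 : 0 ≤ e 0 := le_trans hc (hmin 0)
      have l1 : 0 ≤ e 1 := le_trans hc (hmin 1)
      have l2 : 0 ≤ e 2 := le_trans hc (hmin 2)
      fin_cases i0 <;> simp only [Fin.mk_zero, Fin.mk_one] at hi0 <;>
        rcases lt_or_gt_of_ne hi0 with h | h <;> simp_all <;> linarith
    have hne : imax ≠ imin := fun h => by rw [h] at h1; linarith
    set σ : Fin 3 ≃ Fin 3 := Equiv.ofBijective _ (stmt9_bij imax imin hne) with hσ
    have hσ0 : σ 0 = imax := rfl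
    have hσ2 : σ 2 = imin := rfl
    set l1 : ℝ := e imax with hl1
    set l3 : ℝ := e imin with hl3
    set l2 : ℝ := e (σ 1) with hl2
    have hsum' : l1 + l2 + l3 = 0 := by
      have := Equiv.sum_comp σ e
      rw [Fin.sum_univ_three, Fin.sum_univ_three, hσ0, hσ2] at this
      linarith [this]
    obtain ⟨p, hpd⟩ : ∃ p : ℝ, p = Real.sqrt l1 := ⟨_, rfl⟩
    obtain ⟨q, hqd⟩ : ∃ q : ℝ, q = Real.sqrt (-l3) := ⟨_, rfl⟩
    obtain ⟨t, htd⟩ : ∃ t : ℝ, t = Real.sqrt (l1 - l3) := ⟨_, rfl⟩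
    have hp : p^2 = l1 := by rw [hpd]; exact Real.sq_sqrt h1.le
    have hq : q^2 = -l3 := by rw [hqd]; exact Real.sq_sqrt (by linarith)
    have ht : t^2 = p^2 + q^2 := by
      rw [htd, Real.sq_sqrt (by linarith : (0:ℝ) ≤ l1 - l3), hp, hq]; ring
    have htpos : 0 < t := by rw [htd]; exact Real.sqrt_pos.mpr (by linarith)
    have htne : t ≠ 0 := ne_of_gt htpos
    obtain ⟨c, hcd⟩ : ∃ c : ℝ, c = p / t := ⟨_, rfl⟩
    obtain ⟨s, hsd⟩ : ∃ s : ℝ, s = q / t := ⟨_, rfl⟩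
    have hcs : c^2 + s^2 = 1 := by
      rw [hcd, hsd]
      field_simp
      linarith [ht]
    obtain ⟨Q0, hQ0d⟩ : ∃ Q0 : Matrix (Fin 3) (Fin 3) ℝ, Q0 = !![c,0,s; 0,1,0; s,0,-c] :=
      ⟨_, rfl⟩
    have hQ0t : Q0ᵀ = Q0 := by
      rw [hQ0d]; ext i j; fin_cases i <;> fin_cases j <;> simp
    have hQ0 : Q0 * Q0ᵀ = 1 := by
      rw [hQ0t, hQ0d, mul_fin_three, one_fin_three]
      ring_nf
      rw [hcs]
    refine ⟨Q0.submatrix id ⇑σ.symm, l1 + l3, 2*p*q, ?_, ?_⟩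
    · rw [transpose_submatrix, submatrix_mul_equiv Q0 Q0ᵀ id σ.symm id, hQ0, submatrix_id_id]
    · intro u
      have hmv : Q0.submatrix id ⇑σ.symm *ᵥ u = Q0 *ᵥ (u ∘ σ) := by
        rw [submatrix_mulVec_equiv Q0 u id σ.symm]
        simp
      have hcomp : ∀ i, (Q0 *ᵥ (u ∘ σ)) i
          = ![c * u (σ 0) + s * u (σ 2), u (σ 1), s * u (σ 0) - c * u (σ 2)] i := by
        intro i
        fin_cases i <;> simp [hQ0d, mulVec, dotProduct, Fin.sum_univ_three] <;> ring
      rw [hmv]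
      rw [show ((Q0 *ᵥ (u ∘ σ)) 0) = c * u (σ 0) + s * u (σ 2) from hcomp 0,
          show ((Q0 *ᵥ (u ∘ σ)) 1) = u (σ 1) from hcomp 1,
          show ((Q0 *ᵥ (u ∘ σ)) 2) = s * u (σ 0) - c * u (σ 2) from hcomp 2]
      have hre : (∑ i, e i * u i ^ 2)
          = l1 * u (σ 0) ^ 2 + l2 * u (σ 1) ^ 2 + l3 * u (σ 2) ^ 2 := by
        rw [← Equiv.sum_comp σ (fun i => e i * u i ^ 2), Fin.sum_univ_three, hσ0, hσ2]
      rw [hre]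
      have hA : l1 + l3 = p^2 - q^2 := by linarith
      have hl2' : l2 = q^2 - p^2 := by linarith
      have hl3' : l3 = -q^2 := by linarith
      rw [hcd, hsd, hA, hl2']
      nth_rewrite 1 [← hp]
      rw [hl3']
      exact stmt9_key p q t (u (σ 0)) (u (σ 1)) (u (σ 2)) ht htne


theorem stmt9 (M : Matrix (Fin 3) (Fin 3) ℝ) (hM : Mᵀ = M) (htr : M.trace = 0) :
    ∃ (k : Matrix (Fin 3) (Fin 3) ℝ) (A B : ℝ),
      k * kᵀ = 1 ∧ k.det = 1 ∧
      ∀ v : Fin 3 → ℝ,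
        v ⬝ᵥ (M *ᵥ v)
          = A * ((k *ᵥ v) 0 ^ 2 - (k *ᵥ v) 1 ^ 2) + B * ((k *ᵥ v) 0 * (k *ᵥ v) 2) := by
  have hher : M.IsHermitian := by
    rw [Matrix.IsHermitian, conjTranspose_eq_transpose_of_trivial, hM]
  set U : Matrix (Fin 3) (Fin 3) ℝ := (hher.eigenvectorUnitary : Matrix (Fin 3) (Fin 3) ℝ)
    with hUd
  set e : Fin 3 → ℝ := hher.eigenvalues with hed
  have hstar : star U = Uᵀ := conjTranspose_eq_transpose_of_trivial U
  have hspec : M = U * diagonal e * Uᵀ := by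
    have := hher.spectral_theorem
    rwa [Unitary.conjStarAlgAut_apply, ← hUd, hstar, RCLike.ofReal_real_eq_id, Function.id_comp] at this
  have hUU : U * Uᵀ = 1 := by
    have := (Matrix.mem_unitaryGroup_iff).mp hher.eigenvectorUnitary.2
    rwa [hstar] at this
  have hUU' : Uᵀ * U = 1 := by
    have := (Matrix.mem_unitaryGroup_iff').mp hher.eigenvectorUnitary.2
    rwa [hstar] at this
  have hesum : e 0 + e 1 + e 2 = 0 := by
    have h1 : M.trace = (diagonal e).trace := by
      rw [hspec, Matrix.trace_mul_cycle, hUU', one_mul]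
    rw [htr, Matrix.trace_diagonal, Fin.sum_univ_three] at h1
    linarith
  obtain ⟨Q, A, B, hQ, hform⟩ := stmt9_diag e hesum
  set k₁ : Matrix (Fin 3) (Fin 3) ℝ := Q * Uᵀ with hk₁d
  have hk₁ : k₁ * k₁ᵀ = 1 := by
    rw [hk₁d, transpose_mul, transpose_transpose, mul_assoc, ← mul_assoc Uᵀ, hUU', one_mul, hQ]
  set ε : ℝ := k₁.det with hεd
  have hε : ε * ε = 1 := by
    have := congrArg Matrix.det hk₁
    rwa [det_mul, det_transpose, det_one, ← hεd] at this
  set D : Matrix (Fin 3) (Fin 3) ℝ := diagonal ![1, ε, 1] with hDd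
  have hDD : D * Dᵀ = 1 := by
    rw [hDd, diagonal_transpose, diagonal_mul_diagonal]
    have : (fun i => ![1, ε, 1] i * ![1, ε, 1] i : Fin 3 → ℝ) = fun _ => 1 := by
      funext i; fin_cases i <;> simp [hε]
    rw [this]
    exact Matrix.diagonal_one
  refine ⟨D * k₁, A, B, ?_, ?_, ?_⟩
  · rw [transpose_mul, mul_assoc, ← mul_assoc k₁, hk₁, one_mul, hDD]
  · rw [det_mul, hDd, det_diagonal]
    simp [Fin.prod_univ_three, ← hεd, hε]
  · intro v
    set u : Fin 3 → ℝ := Uᵀ *ᵥ v with hud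
    have hquad : v ⬝ᵥ (M *ᵥ v) = ∑ i, e i * u i ^ 2 := by
      rw [hspec, ← mulVec_mulVec, ← mulVec_mulVec, dotProduct_mulVec, ← mulVec_transpose]
      simp only [← hud, mulVec_diagonal, dotProduct]
      refine Finset.sum_congr rfl fun i _ => ?_
      ring
    have hkv : (D * k₁) *ᵥ v = D *ᵥ (Q *ᵥ u) := by
      rw [← mulVec_mulVec, hk₁d, ← mulVec_mulVec, hud]
    have h0 : ((D * k₁) *ᵥ v) 0 = (Q *ᵥ u) 0 := by
      rw [hkv]; simp [hDd, mulVec_diagonal]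
    have h1 : ((D * k₁) *ᵥ v) 1 = ε * (Q *ᵥ u) 1 := by
      rw [hkv]; simp [hDd, mulVec_diagonal]
    have h2 : ((D * k₁) *ᵥ v) 2 = (Q *ᵥ u) 2 := by
      rw [hkv]; simp [hDd, mulVec_diagonal]
    rw [hquad, h0, h1, h2, hform u]
    have : (ε * (Q *ᵥ u) 1) ^ 2 = (Q *ᵥ u) 1 ^ 2 := by
      have : ε ^ 2 = 1 := by rw [pow_two, hε]
      rw [mul_pow, this, one_mul]
    rw [this]
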